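/- Let F : ℝ → ℝ be monotone nondecreasing, let q > 0, h ≥ 0, x ∈ ℝ, let w : [0,∞) → ℝ be continuous, and suppose U, V : [0,∞) → ℝ are continuous functions satisfying U(t) = x + w(t) − ∫₀ᵗ F(U(s)) ds and V(t) = x + h + w(t) − ∫₀ᵗ F(V(s)) ds for all t ≥ 0. Then for every t ≥ 0, 0 ≤ ∫₀ᵗ e^{−qs}(F(V(s)) − F(U(s))) ds ≤ h. -/

import Mathlib

open intervalIntegral

open MeasureTheory Set


lemma integ_FU (F : ℝ → ℝ) (hF : Monotone F) (U : ℝ → ℝ)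
    (hUc : ContinuousOn U (Set.Ici 0)) {a b : ℝ} (ha : 0 ≤ a) (hab : a ≤ b) :
    IntervalIntegrable (fun s => F (U s)) volume a b := by
  have hsub : Icc a b ⊆ Ici (0:ℝ) := fun s hs => le_trans ha hs.1
  have hUc' : ContinuousOn U (Icc a b) := hUc.mono hsub
  have hK : IsCompact (U '' Icc a b) := (isCompact_Icc).image_of_continuousOn hUc'
  have hne : (Icc a b).Nonempty := nonempty_Icc.2 hab
  set m := sInf (U '' Icc a b) with hm
  set M := sSup (U '' Icc a b) with hM
  have hbd : ∀ s ∈ Icc a b, F m ≤ F (U s) ∧ F (U s) ≤ F M := by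
    intro s hs
    exact ⟨hF (csInf_le hK.bddBelow (mem_image_of_mem U hs)),
      hF (le_csSup hK.bddAbove (mem_image_of_mem U hs))⟩
  have hmeas : AEStronglyMeasurable (fun s => F (U s)) (volume.restrict (Icc a b)) := by
    have h1 : AEMeasurable U (volume.restrict (Icc a b)) :=
      hUc'.aemeasurable measurableSet_Icc
    exact (hF.measurable.comp_aemeasurable h1).aestronglyMeasurable
  have hint : IntegrableOn (fun s => F (U s)) (Icc a b) volume := by
    refine Integrable.mono' (g := fun _ => max |F m| |F M|)
      (integrableOn_const measure_Icc_lt_top.ne) hmeas ?_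
    filter_upwards [ae_restrict_mem measurableSet_Icc] with s hs
    rw [Real.norm_eq_abs, abs_le]
    obtain ⟨h1, h2⟩ := hbd s hs
    refine ⟨?_, h2.trans ((le_abs_self _).trans (le_max_right _ _))⟩
    calc -(max |F m| |F M|) ≤ -|F m| := by simp [neg_le_neg_iff, le_max_left]
      _ ≤ F m := neg_abs_le _
      _ ≤ F (U s) := h1
  exact (intervalIntegrable_iff_integrableOn_Icc_of_le hab).2 hint

lemma comparison (F : ℝ → ℝ) (hF : Monotone F)
    (h x : ℝ) (hh : 0 ≤ h) (w U V : ℝ → ℝ)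
    (hUc : ContinuousOn U (Set.Ici 0)) (hVc : ContinuousOn V (Set.Ici 0))
    (hU : ∀ t ≥ (0:ℝ), U t = x + w t - ∫ s in (0:ℝ)..t, F (U s))
    (hV : ∀ t ≥ (0:ℝ), V t = x + h + w t - ∫ s in (0:ℝ)..t, F (V s)) :
    ∀ t ≥ (0:ℝ), U t ≤ V t := by
  intro t ht
  by_contra hlt
  push_neg at hlt
  set D : ℝ → ℝ := fun s => V s - U s with hDdef
  have hDc : ContinuousOn D (Ici (0:ℝ)) := hVc.sub hUc
  have hD : ∀ s ≥ (0:ℝ), D s = h - ∫ u in (0:ℝ)..s, (F (V u) - F (U u)) := by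
    intro s hs
    have := integral_sub (integ_FU F hF V hVc le_rfl hs) (integ_FU F hF U hUc le_rfl hs)
    simp only [hDdef, hU s hs, hV s hs, this]
    ring
  have hDt : D t < 0 := by simp [hDdef]; linarith
  set S : Set ℝ := Icc 0 t ∩ D ⁻¹' (Ici 0) with hS
  have h0S : (0:ℝ) ∈ S := by
    constructor
    · exact ⟨le_refl _, ht⟩
    · show (0:ℝ) ≤ D 0
      have := hD 0 le_rfl
      simp at this
      simp [this, hh]
  have hScl : IsClosed S :=
    (hDc.mono (fun s hs => hs.1)).preimage_isClosed_of_isClosed isClosed_Icc isClosed_Ici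
  have hSbdd : BddAbove S := BddAbove.mono (fun s hs => hs.1) bddAbove_Icc
  set τ := sSup S with hτ
  have hτS : τ ∈ S := hScl.csSup_mem ⟨0, h0S⟩ hSbdd
  have hτ0 : 0 ≤ τ := hτS.1.1
  have hτt : τ ≤ t := hτS.1.2
  have hDτ : 0 ≤ D τ := hτS.2
  have hτlt : τ < t := lt_of_le_of_ne hτt (fun he => absurd hDτ (by rw [he]; linarith))
  have hneg : ∀ s ∈ Ioc τ t, D s < 0 := by
    intro s hs
    by_contra hn
    push_neg at hn
    have : s ∈ S := ⟨⟨hτ0.trans hs.1.le, hs.2⟩, hn⟩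
    exact absurd (le_csSup hSbdd this) (not_le.2 hs.1)
  have hIτ := integ_FU F hF V hVc le_rfl hτ0 |>.sub (integ_FU F hF U hUc le_rfl hτ0)
  have hIt := integ_FU F hF V hVc le_rfl (hτ0.trans hτlt.le) |>.sub
    (integ_FU F hF U hUc le_rfl (hτ0.trans hτlt.le))
  have hkey : D t - D τ = -(∫ u in τ..t, (F (V u) - F (U u))) := by
    rw [hD t (hτ0.trans hτlt.le), hD τ hτ0]
    rw [← integral_interval_sub_left hIt hIτ]
    ring
  have hnonpos : (∫ u in τ..t, (F (V u) - F (U u))) ≤ 0 := by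
    rw [integral_of_le hτlt.le]
    refine setIntegral_nonpos measurableSet_Ioc ?_
    intro s hs
    have := hneg s hs
    have hVU : V s ≤ U s := by simp [hDdef] at this; linarith
    simp [sub_nonpos, hF hVU]
  linarith [hkey, hnonpos, hDτ, hDt]

/-- pathwise estimate behind I_F' ≤ 1. If F is nondecreasing, q > 0,
h ≥ 0, and U, V are continuous solutions of the same integral equation driven by a
common continuous path w, started from x and x + h respectively, then for all t ≥ 0,
0 ≤ ∫₀ᵗ e^{−qs}(F(V(s)) − F(U(s))) ds ≤ h. -/
theorem stmt_6 (F : ℝ → ℝ) (hF : Monotone F)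
    (q h x : ℝ) (hq : 0 < q) (hh : 0 ≤ h)
    (w U V : ℝ → ℝ) (hw : ContinuousOn w (Set.Ici 0))
    (hUc : ContinuousOn U (Set.Ici 0)) (hVc : ContinuousOn V (Set.Ici 0))
    (hU : ∀ t ≥ (0:ℝ), U t = x + w t - ∫ s in (0:ℝ)..t, F (U s))
    (hV : ∀ t ≥ (0:ℝ), V t = x + h + w t - ∫ s in (0:ℝ)..t, F (V s)) :
    ∀ t ≥ (0:ℝ),
      0 ≤ (∫ s in (0:ℝ)..t, Real.exp (-q * s) * (F (V s) - F (U s))) ∧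
        (∫ s in (0:ℝ)..t, Real.exp (-q * s) * (F (V s) - F (U s))) ≤ h := by
  have hcomp := comparison F hF h x hh w U V hUc hVc hU hV
  intro t ht
  have hg : ∀ s ≥ (0:ℝ), 0 ≤ F (V s) - F (U s) := fun s hs =>
    sub_nonneg.2 (hF (hcomp s hs))
  have hIg : IntervalIntegrable (fun s => F (V s) - F (U s)) volume 0 t :=
    (integ_FU F hF V hVc le_rfl ht).sub (integ_FU F hF U hUc le_rfl ht)
  have hIe : IntervalIntegrable (fun s => Real.exp (-q * s) * (F (V s) - F (U s))) volume 0 t :=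
    hIg.continuousOn_mul (Continuous.continuousOn (by continuity))
  constructor
  · refine integral_nonneg ht (fun u hu => ?_)
    exact mul_nonneg (Real.exp_pos _).le (hg u hu.1)
  · have hmono : (∫ s in (0:ℝ)..t, Real.exp (-q * s) * (F (V s) - F (U s)))
        ≤ ∫ s in (0:ℝ)..t, (F (V s) - F (U s)) := by
      refine integral_mono_on ht hIe hIg (fun u hu => ?_)
      have he : Real.exp (-q * u) ≤ 1 := Real.exp_le_one_iff.2 (by nlinarith [hu.1])
      nlinarith [hg u hu.1, (Real.exp_pos (-q*u)).le]
    have hsum : (∫ s in (0:ℝ)..t, (F (V s) - F (U s))) = h - (V t - U t) := by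
      have h1 := integral_sub (integ_FU F hF V hVc le_rfl ht) (integ_FU F hF U hUc le_rfl ht)
      rw [h1, hU t ht, hV t ht]; ring
    have hDt : 0 ≤ V t - U t := sub_nonneg.2 (hcomp t ht)
    linarith
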